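/- Let F_q be the finite field with q = p^s elements (p prime), ε ∈ F_q^*, r = p^t with t ≥ 0 an integer, ℓ ≥ 1 an integer, and (u(n))_{n≥1} a sequence in F_q^* satisfying u(ℓ+m) = ε^{(-1)^m} · (u(m))^r for all integers m ≥ 1. Then the sequence (u(n))_{n≥1} is purely periodic, i.e. there exists an integer N ≥ 1 such that u(n+N) = u(n) for all n ≥ 1. -/

import Mathlib

theorem stmt6 (p : ℕ) (hp : p.Prime) (s : ℕ) (hs : 1 ≤ s) (t : ℕ)
    (F : Type*) [Field F] [Fintype F] (hF : Fintype.card F = p ^ s)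
    (ε : Fˣ) (ℓ : ℕ) (hℓ : 1 ≤ ℓ) (u : ℕ → Fˣ)
    (h : ∀ m : ℕ, 1 ≤ m → u (ℓ + m) = ε ^ ((-1 : ℤ) ^ m) * u m ^ p ^ t) :
    ∃ N : ℕ, 1 ≤ N ∧ ∀ n : ℕ, 1 ≤ n → u (n + N) = u n := by
  classical
  have hℓ0 : 0 < ℓ := hℓ
  -- Frobenius-type injectivity on units
  have hpowinj : ∀ a b : Fˣ, a ^ (p ^ t) = b ^ (p ^ t) → a = b := by
    intro a b hab
    have hcard : Fintype.card Fˣ = p ^ s - 1 := by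
      rw [Fintype.card_units, hF]
    have hco0 : Nat.Coprime p (p ^ s - 1) := by
      rw [hp.coprime_iff_not_dvd]
      intro hdvd
      have h1 : p ∣ p ^ s := dvd_pow_self p (by omega)
      have h2 : p ∣ p ^ s - (p ^ s - 1) := Nat.dvd_sub h1 hdvd
      have h3 : 1 ≤ p ^ s := Nat.one_le_pow _ _ hp.pos
      have : p ^ s - (p ^ s - 1) = 1 := by omega
      rw [this] at h2
      exact Nat.Prime.one_lt hp |>.ne' (Nat.dvd_one.mp h2)
    have hco : Nat.Coprime (p ^ t) (p ^ s - 1) := Nat.Coprime.pow_left t hco0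
    have h1 : (a * b⁻¹) ^ (p ^ t) = 1 := by
      rw [mul_pow, hab, inv_pow, mul_inv_cancel]
    have hd1 : orderOf (a * b⁻¹) ∣ p ^ t := orderOf_dvd_of_pow_eq_one h1
    have hd2 : orderOf (a * b⁻¹) ∣ p ^ s - 1 := hcard ▸ orderOf_dvd_card
    have : orderOf (a * b⁻¹) ∣ 1 := hco ▸ Nat.dvd_gcd hd1 hd2
    have : a * b⁻¹ = 1 := orderOf_eq_one_iff.mp (Nat.dvd_one.mp this)
    exact mul_inv_eq_one.mp this
  -- state space and one-step map
  set α := (Fin ℓ → Fˣ) × Bool with hα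
  let f : α → α := fun x =>
    (fun i => if hi : (i : ℕ) + 1 < ℓ then x.1 ⟨(i : ℕ) + 1, hi⟩
      else (if x.2 then ε else ε⁻¹) * (x.1 ⟨0, hℓ0⟩) ^ (p ^ t), !x.2)
  let V : ℕ → α := fun n => (fun i => u (n + (i : ℕ)), decide (n % 2 = 0))
  -- the step equation
  have hstep : ∀ n : ℕ, 1 ≤ n → V (n + 1) = f (V n) := by
    intro n hn
    have hpar : ε ^ ((-1 : ℤ) ^ n) = if decide (n % 2 = 0) then ε else ε⁻¹ := by
      rcases Nat.even_or_odd n with he | ho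
      · rw [he.neg_one_pow, zpow_one]
        simp [Nat.even_iff.mp he]
      · rw [ho.neg_one_pow, zpow_neg_one]
        simp [Nat.odd_iff.mp ho]
    refine Prod.ext ?_ ?_
    · funext i
      show u (n + 1 + (i : ℕ)) = _
      by_cases hi : (i : ℕ) + 1 < ℓ
      · simp only [f, dif_pos hi]
        show _ = u (n + ((i : ℕ) + 1))
        ring_nf
      · have hiℓ : (i : ℕ) + 1 = ℓ := by have := i.2; omega
        simp only [f, dif_neg hi]
        have : n + 1 + (i : ℕ) = ℓ + n := by omega
        rw [this, h n hn, hpar]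
        show _ = _ * u (n + 0) ^ p ^ t
        rw [Nat.add_zero]
    · show decide ((n + 1) % 2 = 0) = !decide (n % 2 = 0)
      rcases Nat.mod_two_eq_zero_or_one n with h2 | h2 <;>
        simp [Nat.add_mod, h2]
  -- f is injective
  have hinj : Function.Injective f := by
    rintro ⟨a, b⟩ ⟨a', b'⟩ hfe
    have hb : b = b' := by
      have := congrArg Prod.snd hfe
      simpa [f] using this
    have h1 : ∀ i : Fin ℓ,
        (if hi : (i : ℕ) + 1 < ℓ then a ⟨(i : ℕ) + 1, hi⟩
          else (if b then ε else ε⁻¹) * (a ⟨0, hℓ0⟩) ^ (p ^ t)) =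
        (if hi : (i : ℕ) + 1 < ℓ then a' ⟨(i : ℕ) + 1, hi⟩
          else (if b' then ε else ε⁻¹) * (a' ⟨0, hℓ0⟩) ^ (p ^ t)) := by
      intro i
      exact congrFun (congrArg Prod.fst hfe) i
    have ha : a = a' := by
      funext j
      rcases Nat.eq_zero_or_pos (j : ℕ) with hj0 | hj1
      · -- use the last slot
        have hlast := h1 ⟨ℓ - 1, by omega⟩
        have hne : ¬ ((ℓ - 1) + 1 < ℓ) := by omega
        rw [dif_neg hne, dif_neg hne, hb] at hlast
        have := mul_left_cancel hlast
        have h0 : a ⟨0, hℓ0⟩ = a' ⟨0, hℓ0⟩ := hpowinj _ _ this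
        have : j = ⟨0, hℓ0⟩ := by
          apply Fin.ext; simpa using hj0
        rw [this]; exact h0
      · have hlt : ((j : ℕ) - 1) + 1 < ℓ := by have := j.2; omega
        have := h1 ⟨(j : ℕ) - 1, by omega⟩
        rw [dif_pos hlt, dif_pos hlt] at this
        have hj : (⟨((j : ℕ) - 1) + 1, hlt⟩ : Fin ℓ) = j := by
          apply Fin.ext; simp; omega
        rwa [hj] at this
    rw [ha, hb]
  have hbij : Function.Bijective f := Finite.injective_iff_bijective.mp hinj
  let e : Equiv.Perm α := Equiv.ofBijective f hbij
  have hecoe : ∀ x, e x = f x := fun x => rfl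
  refine ⟨orderOf e, orderOf_pos e, ?_⟩
  have hiter : ∀ k n : ℕ, 1 ≤ n → V (n + k) = (e ^ k) (V n) := by
    intro k
    induction k with
    | zero => intro n hn; simp
    | succ k ih =>
      intro n hn
      have : n + (k + 1) = (n + k) + 1 := by omega
      rw [this, hstep (n + k) (by omega), ← hecoe, ih n hn, pow_succ']
      rfl
  intro n hn
  have hVN : V (n + orderOf e) = V n := by
    rw [hiter _ n hn, pow_orderOf_eq_one]
    rfl
  have := congrFun (congrArg Prod.fst hVN) ⟨0, hℓ0⟩
  simpa [V] using this
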